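/- For every k ≥ 2, the function f_k satisfies salt(f_k) ≥ 2^{k−2} and hence salt(f_k) ≥ 2^{s(f_k) − 2}; in particular the shift-invariant alternation of f_k is exponential in its sensitivity. -/

import Mathlib

open scoped Classical

/-- Pointwise XOR of Boolean vectors. -/
def bxor {n : ℕ} (x y : Fin n → Bool) : Fin n → Bool := fun i => Bool.xor (x i) (y i)

/-- Indicator vector of a set of coordinates. -/
def eB {n : ℕ} (B : Finset (Fin n)) : Fin n → Bool := fun i => decide (i ∈ B)

/-- Standard basis vector. -/
def eI {n : ℕ} (i : Fin n) : Fin n → Bool := fun j => decide (j = i)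

/-- Sensitivity of `f` at `a`. -/
def sensAt {n : ℕ} (f : (Fin n → Bool) → Bool) (a : Fin n → Bool) : ℕ :=
  (Finset.univ.filter fun i : Fin n => f (bxor a (eI i)) ≠ f a).card

/-- Sensitivity of `f`. -/
def sens {n : ℕ} (f : (Fin n → Bool) → Bool) : ℕ :=
  Finset.univ.sup fun a : Fin n → Bool => sensAt f a

/-- Block sensitivity of `f` at `a`: the largest number of pairwise disjoint nonempty
sensitive blocks. -/
def bsAt {n : ℕ} (f : (Fin n → Bool) → Bool) (a : Fin n → Bool) : ℕ :=
  Finset.univ.sup fun S : Finset (Finset (Fin n)) =>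
    if (∀ B ∈ S, B.Nonempty ∧ f (bxor a (eB B)) ≠ f a) ∧
       (∀ B ∈ S, ∀ C ∈ S, B ≠ C → Disjoint B C)
    then S.card else 0

/-- Block sensitivity of `f`. -/
def bs {n : ℕ} (f : (Fin n → Bool) → Bool) : ℕ :=
  Finset.univ.sup fun a : Fin n → Bool => bsAt f a

/-- `x` is a monotone chain `0^n = x^0 ≺ x^1 ≺ ⋯ ≺ x^n = 1^n` in the Boolean cube
(each step strictly increases, hence flips exactly one coordinate from 0 to 1). -/
def IsChainOn {n : ℕ} (x : Fin (n + 1) → Fin n → Bool) : Prop :=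
  x 0 = (fun _ => false) ∧ x (Fin.last n) = (fun _ => true) ∧
    ∀ i : Fin n, (∀ j, x i.castSucc j ≤ x i.succ j) ∧ x i.castSucc ≠ x i.succ

/-- Alternation of `f` along a chain `x`. -/
def altChain {n : ℕ} (f : (Fin n → Bool) → Bool) (x : Fin (n + 1) → Fin n → Bool) : ℕ :=
  (Finset.univ.filter fun i : Fin n => f (x i.succ) ≠ f (x i.castSucc)).card

/-- Alternation of `f`: maximal alternation along a chain. -/
noncomputable def altF {n : ℕ} (f : (Fin n → Bool) → Bool) : ℕ :=
  Finset.univ.sup fun x : Fin (n + 1) → Fin n → Bool =>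
    if IsChainOn x then altChain f x else 0

/-- Shift-invariant alternation: minimum alternation over all shifts of `f`. -/
noncomputable def saltF {n : ℕ} (f : (Fin n → Bool) → Bool) : ℕ :=
  (Finset.univ : Finset (Fin n → Bool)).inf' Finset.univ_nonempty
    fun b => altF fun x => f (bxor x b)
/-- The recursively defined decision-tree function family: `fTree 1 = id` on one bit, and
`fTree (k+1) (b, z, z') = fTree k z` if `b = 0`, `fTree k z'` if `b = 1`
(layout: bit 0 is `b`, bits `1..2^k-1` are `z`, bits `2^k..2^(k+1)-2` are `z'`). -/
def fTree : (k : ℕ) → (Fin (2 ^ k - 1) → Bool) → Bool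
  | 0, _ => false
  | 1, x => x ⟨0, by norm_num⟩
  | (k + 2), x =>
    if x ⟨0, by have h : (1:ℕ) < 2 ^ (k + 2) := Nat.one_lt_two_pow_iff.mpr (by omega); omega⟩ then
      fTree (k + 1) (fun j => x ⟨j.1 + 2 ^ (k + 1), by
        have hj := j.isLt
        have h1 : 0 < 2 ^ (k + 1) := pow_pos (by omega) _
        have h2 : 2 ^ (k + 2) = 2 ^ (k + 1) * 2 := pow_succ 2 (k + 1)
        omega⟩)
    else
      fTree (k + 1) (fun j => x ⟨j.1 + 1, by
        have hj := j.isLt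
        have h1 : 0 < 2 ^ (k + 1) := pow_pos (by omega) _
        have h2 : 2 ^ (k + 2) = 2 ^ (k + 1) * 2 := pow_succ 2 (k + 1)
        omega⟩)

/-! ### Auxiliary machinery -/

/-- Alternation count of a Boolean sequence. -/
def altB {N : ℕ} (v : Fin (N + 1) → Bool) : ℕ :=
  (Finset.univ.filter fun i : Fin N => v i.succ ≠ v i.castSucc).card

/-- Chain determined by a flip-order function `σ`. -/
def chainOf {n : ℕ} (σ : Fin n → Fin n) : Fin (n + 1) → Fin n → Bool :=
  fun i j => decide ((σ j : ℕ) < (i : ℕ))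

lemma chainOf_isChain {n : ℕ} (σ : Fin n → Fin n) (hσ : Function.Surjective σ) :
    IsChainOn (chainOf σ) := by
  refine ⟨?_, ?_, ?_⟩
  · funext j; simp [chainOf]
  · funext j; simp [chainOf, (σ j).isLt]
  · intro i
    constructor
    · intro j
      by_cases h : ((σ j : ℕ) < (i : ℕ))
      · simp [chainOf, h, Nat.lt_succ_of_lt h]
      · simp [chainOf, h]
    · obtain ⟨j, hj⟩ := hσ i
      intro hcontra
      have := congrFun hcontra j
      simp [chainOf, hj] at this

lemma altChain_eq_altB {n : ℕ} (f : (Fin n → Bool) → Bool) (x : Fin (n + 1) → Fin n → Bool) :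
    altChain f x = altB (fun i => f (x i)) := rfl

/-- Gluing lemma: a sequence that contains two sequences as segments alternates at least
the sum of their alternations. -/
lemma glue {m n : ℕ} (hn : n = 2 * m + 1) (V : Fin (n + 1) → Bool) (v0 v1 : Fin (m + 1) → Bool)
    (h0 : ∀ i : Fin (m + 1), V ⟨i.1, by have := i.isLt; omega⟩ = v0 i)
    (h1 : ∀ i : Fin (m + 1), V ⟨m + 1 + i.1, by have := i.isLt; omega⟩ = v1 i) :
    altB v0 + altB v1 ≤ altB V := by
  classical
  set e0 : Fin m → Fin n := fun i => ⟨i.1, by have := i.isLt; omega⟩ with he0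
  set e1 : Fin m → Fin n := fun i => ⟨m + 1 + i.1, by have := i.isLt; omega⟩ with he1
  have inj0 : Function.Injective e0 := by
    intro a b hab; apply Fin.ext; simpa [he0, Fin.ext_iff] using hab
  have inj1 : Function.Injective e1 := by
    intro a b hab; apply Fin.ext
    have : m + 1 + a.1 = m + 1 + b.1 := by simpa [he1, Fin.ext_iff] using hab
    omega
  set P0 := Finset.univ.filter fun i : Fin m => v0 i.succ ≠ v0 i.castSucc with hP0
  set P1 := Finset.univ.filter fun i : Fin m => v1 i.succ ≠ v1 i.castSucc with hP1
  have key0 : ∀ i : Fin m, v0 i.succ ≠ v0 i.castSucc →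
      V (e0 i).succ ≠ V (e0 i).castSucc := by
    intro i hi
    have hA : V (e0 i).succ = v0 i.succ := by
      have := h0 i.succ
      convert this using 2
      rfl
    have hB : V (e0 i).castSucc = v0 i.castSucc := by
      have := h0 i.castSucc
      convert this using 2
      rfl
    rw [hA, hB]; exact hi
  have key1 : ∀ i : Fin m, v1 i.succ ≠ v1 i.castSucc →
      V (e1 i).succ ≠ V (e1 i).castSucc := by
    intro i hi
    have hA : V (e1 i).succ = v1 i.succ := by
      have := h1 i.succ
      convert this using 2
      rfl
    have hB : V (e1 i).castSucc = v1 i.castSucc := by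
      have := h1 i.castSucc
      convert this using 2
      rfl
    rw [hA, hB]; exact hi
  have hsub : (P0.image e0) ∪ (P1.image e1) ⊆
      Finset.univ.filter fun i : Fin n => V i.succ ≠ V i.castSucc := by
    intro x hx
    simp only [Finset.mem_union, Finset.mem_image, hP0, hP1, Finset.mem_filter,
      Finset.mem_univ, true_and] at hx ⊢
    rcases hx with ⟨i, hi, rfl⟩ | ⟨i, hi, rfl⟩
    · exact key0 i hi
    · exact key1 i hi
  have hdisj : Disjoint (P0.image e0) (P1.image e1) := by
    rw [Finset.disjoint_left]
    intro x hx0 hx1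
    simp only [Finset.mem_image] at hx0 hx1
    obtain ⟨i, _, rfl⟩ := hx0
    obtain ⟨j, _, hj⟩ := hx1
    have : m + 1 + j.1 = i.1 := by simpa [he0, he1, Fin.ext_iff] using hj
    have := i.isLt; omega
  have hcard := Finset.card_le_card hsub
  rw [Finset.card_union_of_disjoint hdisj, Finset.card_image_of_injective _ inj0,
    Finset.card_image_of_injective _ inj1] at hcard
  exact hcard
lemma two_pow_succ_succ (k : ℕ) : 2 ^ (k + 2) = 2 * 2 ^ (k + 1) := by ring

lemma fTree_succ_succ (k : ℕ) (x : Fin (2 ^ (k + 2) - 1) → Bool) :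
    fTree (k + 2) x =
      if x ⟨0, by have h : (1:ℕ) < 2 ^ (k + 2) := Nat.one_lt_two_pow_iff.mpr (by omega); omega⟩ then
        fTree (k + 1) (fun j => x ⟨j.1 + 2 ^ (k + 1), by
          have hj := j.isLt
          have h1 : 0 < 2 ^ (k + 1) := pow_pos (by omega) _
          have h2 : 2 ^ (k + 2) = 2 ^ (k + 1) * 2 := pow_succ 2 (k + 1)
          omega⟩)
      else
        fTree (k + 1) (fun j => x ⟨j.1 + 1, by
          have hj := j.isLt
          have h1 : 0 < 2 ^ (k + 1) := pow_pos (by omega) _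
          have h2 : 2 ^ (k + 2) = 2 ^ (k + 1) * 2 := pow_succ 2 (k + 1)
          omega⟩) := rfl

/-- The combined flip-order permutation for the induction step. -/
def bigPerm (m n : ℕ) (hn : n = 2 * m + 1) (c : Bool) (σL σR : Fin m → Fin m) :
    Fin n → Fin n := fun j =>
  if h0 : j.1 = 0 then ⟨m, by omega⟩
  else if h1 : j.1 ≤ m then
    ⟨(if c then m + 1 else 0) + (σL ⟨j.1 - 1, by omega⟩).1, by
      have := (σL ⟨j.1 - 1, by omega⟩).isLt
      cases c <;> simp <;> omega⟩
  else
    ⟨(if c then 0 else m + 1) + (σR ⟨j.1 - (m + 1), by have := j.isLt; omega⟩).1, by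
      have := (σR ⟨j.1 - (m + 1), by have := j.isLt; omega⟩).isLt
      cases c <;> simp <;> omega⟩

lemma bigPerm_zero (m n : ℕ) (hn : n = 2 * m + 1) (c : Bool) (σL σR : Fin m → Fin m)
    (h : (0:ℕ) < n) : bigPerm m n hn c σL σR ⟨0, h⟩ = ⟨m, by omega⟩ := by
  simp [bigPerm]

lemma bigPerm_left (m n : ℕ) (hn : n = 2 * m + 1) (c : Bool) (σL σR : Fin m → Fin m)
    (j : Fin m) (h : j.1 + 1 < n) :
    bigPerm m n hn c σL σR ⟨j.1 + 1, h⟩ =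
      ⟨(if c then m + 1 else 0) + (σL j).1, by have := (σL j).isLt; cases c <;> simp <;> omega⟩ := by
  have hj := j.isLt
  have h0 : (j.1 + 1 : ℕ) ≠ 0 := by omega
  have h1 : (j.1 + 1 : ℕ) ≤ m := by omega
  simp only [bigPerm, dif_neg h0, dif_pos h1]
  have hjj : (⟨j.1 + 1 - 1, by omega⟩ : Fin m) = j := by apply Fin.ext; simp
  apply Fin.ext
  exact congrArg (fun t => (if c = true then m + 1 else 0) + (σL t).1) hjj

lemma bigPerm_right (m n : ℕ) (hn : n = 2 * m + 1) (c : Bool) (σL σR : Fin m → Fin m)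
    (j : Fin m) (h : j.1 + (m + 1) < n) :
    bigPerm m n hn c σL σR ⟨j.1 + (m + 1), h⟩ =
      ⟨(if c then 0 else m + 1) + (σR j).1, by have := (σR j).isLt; cases c <;> simp <;> omega⟩ := by
  have hj := j.isLt
  have h0 : (j.1 + (m + 1) : ℕ) ≠ 0 := by omega
  have h1 : ¬ (j.1 + (m + 1) : ℕ) ≤ m := by omega
  simp only [bigPerm, dif_neg h0, dif_neg h1]
  have hjj : (⟨j.1 + (m + 1) - (m + 1), by omega⟩ : Fin m) = j := by apply Fin.ext; simp
  apply Fin.ext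
  exact congrArg (fun t => (if c = true then 0 else m + 1) + (σR t).1) hjj

lemma bigPerm_surj (m n : ℕ) (hn : n = 2 * m + 1) (c : Bool) (σL σR : Fin m → Fin m)
    (hL : Function.Surjective σL) (hR : Function.Surjective σR) :
    Function.Surjective (bigPerm m n hn c σL σR) := by
  intro i
  by_cases him : i.1 = m
  · exact ⟨⟨0, by omega⟩, by rw [bigPerm_zero]; apply Fin.ext; simp [him]⟩
  rcases Nat.lt_or_ge i.1 m with hlt | hge
  · -- position < m : first phase
    cases c with
    | false =>
      obtain ⟨j, hj⟩ := hL ⟨i.1, hlt⟩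
      refine ⟨⟨j.1 + 1, by have := j.isLt; omega⟩, ?_⟩
      rw [bigPerm_left]
      apply Fin.ext; simp [hj]
    | true =>
      obtain ⟨j, hj⟩ := hR ⟨i.1, hlt⟩
      refine ⟨⟨j.1 + (m + 1), by have := j.isLt; omega⟩, ?_⟩
      rw [bigPerm_right]
      apply Fin.ext; simp [hj]
  · -- position > m : second phase
    have hgt : m + 1 ≤ i.1 := by omega
    have hlt2 : i.1 - (m + 1) < m := by have := i.isLt; omega
    cases c with
    | false =>
      obtain ⟨j, hj⟩ := hR ⟨i.1 - (m + 1), hlt2⟩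
      refine ⟨⟨j.1 + (m + 1), by have := j.isLt; omega⟩, ?_⟩
      rw [bigPerm_right]
      apply Fin.ext
      simp only [hj]
      show (if (false : Bool) = true then 0 else m + 1) + (i.1 - (m + 1)) = i.1
      rw [if_neg (by simp)]
      omega
    | true =>
      obtain ⟨j, hj⟩ := hL ⟨i.1 - (m + 1), hlt2⟩
      refine ⟨⟨j.1 + 1, by have := j.isLt; omega⟩, ?_⟩
      rw [bigPerm_left]
      apply Fin.ext
      simp only [hj]
      show (if (true : Bool) = true then m + 1 else 0) + (i.1 - (m + 1)) = i.1
      rw [if_pos rfl]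
      omega

lemma main_ind : ∀ k : ℕ, ∀ b : Fin (2 ^ (k + 1) - 1) → Bool,
    ∃ σ : Fin (2 ^ (k + 1) - 1) → Fin (2 ^ (k + 1) - 1), Function.Surjective σ ∧
      2 ^ k ≤ altB (fun i => fTree (k + 1) (bxor (chainOf σ i) b)) := by
  intro k
  induction k with
  | zero =>
    intro b
    refine ⟨id, Function.surjective_id, ?_⟩
    have hfilter : (Finset.univ.filter fun i : Fin (2 ^ (0 + 1) - 1) =>
        (fun i => fTree (0 + 1) (bxor (chainOf id i) b)) i.succ ≠
        (fun i => fTree (0 + 1) (bxor (chainOf id i) b)) i.castSucc) = Finset.univ := by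
      apply Finset.filter_true_of_mem
      intro i _
      have h0 : i.1 = 0 := by have := i.isLt; norm_num at this; omega
      show fTree 1 (bxor (chainOf id i.succ) b) ≠ fTree 1 (bxor (chainOf id i.castSucc) b)
      simp only [fTree, bxor, chainOf, id_eq]
      have e1 : decide (((⟨0, by norm_num⟩ : Fin (2 ^ 1 - 1)) : ℕ) < (i.succ : ℕ)) = true := by
        simp [Fin.val_succ]
      have e2 : decide (((⟨0, by norm_num⟩ : Fin (2 ^ 1 - 1)) : ℕ) < (i.castSucc : ℕ)) = false := by
        simp [Fin.coe_castSucc, h0]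
      rw [e1, e2]
      cases b ⟨0, by norm_num⟩ <;> simp
    rw [altB, hfilter]
    simp
  | succ k IH =>
    intro b
    show ∃ σ : Fin (2 ^ (k + 2) - 1) → Fin (2 ^ (k + 2) - 1), Function.Surjective σ ∧
      2 ^ (k + 1) ≤ altB (fun i => fTree (k + 2) (bxor (chainOf σ i) b))
    have hm : 0 < 2 ^ (k + 1) := pow_pos (by omega) _
    have h2 : 2 ^ (k + 2) = 2 * 2 ^ (k + 1) := two_pow_succ_succ k
    set m := 2 ^ (k + 1) - 1 with hmdef
    have hm1 : m + 1 = 2 ^ (k + 1) := by omega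
    have hn : 2 ^ (k + 2) - 1 = 2 * m + 1 := by omega
    set bL : Fin m → Bool := fun j => b ⟨j.1 + 1, by have := j.isLt; omega⟩ with hbL
    set bR : Fin m → Bool := fun j => b ⟨j.1 + (m + 1), by have := j.isLt; omega⟩ with hbR
    obtain ⟨σL, hσL, hL⟩ := IH bL
    obtain ⟨σR, hσR, hR⟩ := IH bR
    set c := b ⟨0, by omega⟩ with hc
    set σ := bigPerm m (2 ^ (k + 2) - 1) hn c σL σR with hσdef
    refine ⟨σ, bigPerm_surj _ _ _ _ _ _ hσL hσR, ?_⟩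
    set vL : Fin (m + 1) → Bool := fun i => fTree (k + 1) (bxor (chainOf σL i) bL) with hvL
    set vR : Fin (m + 1) → Bool := fun i => fTree (k + 1) (bxor (chainOf σR i) bR) with hvR
    set V : Fin (2 ^ (k + 2) - 1 + 1) → Bool :=
      fun i => fTree (k + 2) (bxor (chainOf σ i) b) with hV
    -- evaluation of the big chain in the first half
    have hcond : ∀ (i : Fin (2 ^ (k + 2) - 1 + 1)) (q : 0 < 2 ^ (k + 2) - 1),
        (bxor (chainOf σ i) b) ⟨0, q⟩ = xor (decide (m < (i : ℕ))) c := by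
      intro i q
      show xor (chainOf σ i ⟨0, q⟩) (b ⟨0, q⟩) = _
      rw [hc]
      congr 1
    have hbranchR : ∀ (i : Fin (2 ^ (k + 2) - 1 + 1)),
        (fun j : Fin (2 ^ (k + 1) - 1) => (bxor (chainOf σ i) b) ⟨j.1 + 2 ^ (k + 1), by
          have hj := j.isLt
          have h1 : 0 < 2 ^ (k + 1) := pow_pos (by omega) _
          have h2 : 2 ^ (k + 2) = 2 ^ (k + 1) * 2 := pow_succ 2 (k + 1)
          omega⟩) =
        fun j : Fin m => xor (decide (((if c then 0 else m + 1) + (σR j).1 : ℕ) < (i : ℕ))) (bR j) := by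
      intro i
      funext j
      have hidx : (⟨j.1 + 2 ^ (k + 1), by have := j.isLt; omega⟩ : Fin (2 ^ (k + 2) - 1)) =
          ⟨j.1 + (m + 1), by have := j.isLt; omega⟩ := by apply Fin.ext; simp; omega
      show (bxor (chainOf σ i) b) ⟨j.1 + 2 ^ (k + 1), _⟩ = _
      rw [hidx]
      show xor (decide (((σ ⟨j.1 + (m + 1), _⟩ : Fin _) : ℕ) < (i : ℕ))) (b ⟨j.1 + (m + 1), _⟩) = _
      rw [hσdef, bigPerm_right]
    have hbranchL : ∀ (i : Fin (2 ^ (k + 2) - 1 + 1)),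
        (fun j : Fin (2 ^ (k + 1) - 1) => (bxor (chainOf σ i) b) ⟨j.1 + 1, by
          have hj := j.isLt
          have h1 : 0 < 2 ^ (k + 1) := pow_pos (by omega) _
          have h2 : 2 ^ (k + 2) = 2 ^ (k + 1) * 2 := pow_succ 2 (k + 1)
          omega⟩) =
        fun j : Fin m => xor (decide (((if c then m + 1 else 0) + (σL j).1 : ℕ) < (i : ℕ))) (bL j) := by
      intro i
      funext j
      show xor (decide (((σ ⟨j.1 + 1, _⟩ : Fin _) : ℕ) < (i : ℕ))) (b ⟨j.1 + 1, _⟩) = _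
      rw [hσdef, bigPerm_left]
    have key : altB vL + altB vR ≤ altB V ∨ altB vR + altB vL ≤ altB V := by
      cases hcc : c with
      | false =>
        left
        apply glue hn V vL vR
        · intro i
          show fTree (k + 2) (bxor (chainOf σ ⟨i.1, by have := i.isLt; omega⟩) b) = vL i
          have hdec : (decide (m < ((⟨i.1, by have := i.isLt; omega⟩ :
              Fin (2 ^ (k + 2) - 1 + 1)) : ℕ))) = false := by
            simp only [decide_eq_false_iff_not]; have := i.isLt; simp; omega
          rw [fTree_succ_succ, hcond _ _, hbranchL _, hbranchR _, hdec]
          simp only [hcc, Bool.xor_false, Bool.false_xor, Bool.true_xor, Bool.xor_true,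
            Bool.not_true, Bool.not_false, Bool.false_eq_true, Bool.true_eq_false,
            if_false, if_true, reduceIte, Nat.zero_add, Nat.add_lt_add_iff_left]
          rfl
        · intro i
          show fTree (k + 2) (bxor (chainOf σ ⟨m + 1 + i.1, by have := i.isLt; omega⟩) b) = vR i
          have hdec : (decide (m < ((⟨m + 1 + i.1, by have := i.isLt; omega⟩ :
              Fin (2 ^ (k + 2) - 1 + 1)) : ℕ))) = true := by
            simp only [decide_eq_true_eq]; omega
          rw [fTree_succ_succ, hcond _ _, hbranchL _, hbranchR _, hdec]
          simp only [hcc, Bool.xor_false, Bool.false_xor, Bool.true_xor, Bool.xor_true,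
            Bool.not_true, Bool.not_false, Bool.false_eq_true, Bool.true_eq_false,
            if_false, if_true, reduceIte, Nat.zero_add, Nat.add_lt_add_iff_left]
          rfl
      | true =>
        right
        apply glue hn V vR vL
        · intro i
          show fTree (k + 2) (bxor (chainOf σ ⟨i.1, by have := i.isLt; omega⟩) b) = vR i
          have hdec : (decide (m < ((⟨i.1, by have := i.isLt; omega⟩ :
              Fin (2 ^ (k + 2) - 1 + 1)) : ℕ))) = false := by
            simp only [decide_eq_false_iff_not]; have := i.isLt; simp; omega
          rw [fTree_succ_succ, hcond _ _, hbranchL _, hbranchR _, hdec]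
          simp only [hcc, Bool.xor_false, Bool.false_xor, Bool.true_xor, Bool.xor_true,
            Bool.not_true, Bool.not_false, Bool.false_eq_true, Bool.true_eq_false,
            if_false, if_true, reduceIte, Nat.zero_add, Nat.add_lt_add_iff_left]
          rfl
        · intro i
          show fTree (k + 2) (bxor (chainOf σ ⟨m + 1 + i.1, by have := i.isLt; omega⟩) b) = vL i
          have hdec : (decide (m < ((⟨m + 1 + i.1, by have := i.isLt; omega⟩ :
              Fin (2 ^ (k + 2) - 1 + 1)) : ℕ))) = true := by
            simp only [decide_eq_true_eq]; omega
          rw [fTree_succ_succ, hcond _ _, hbranchL _, hbranchR _, hdec]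
          simp only [hcc, Bool.xor_false, Bool.false_xor, Bool.true_xor, Bool.xor_true,
            Bool.not_true, Bool.not_false, Bool.false_eq_true, Bool.true_eq_false,
            if_false, if_true, reduceIte, Nat.zero_add, Nat.add_lt_add_iff_left]
          rfl
    have hpow : 2 ^ (k + 1) = 2 ^ k + 2 ^ k := by ring
    rcases key with h | h <;> omega
lemma sensAt_le_card {n : ℕ} (f : (Fin n → Bool) → Bool) (a : Fin n → Bool) :
    sensAt f a ≤ n := by
  classical
  calc sensAt f a ≤ (Finset.univ : Finset (Fin n)).card := Finset.card_filter_le _ _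
    _ = n := by simp

lemma sensAt_fTree_le : ∀ k : ℕ, ∀ a : Fin (2 ^ k - 1) → Bool, sensAt (fTree k) a ≤ k := by
  intro k
  induction k with
  | zero => intro a; calc sensAt _ a ≤ 2 ^ 0 - 1 := sensAt_le_card _ _
                       _ ≤ 0 := by norm_num
  | succ k IH =>
    match k, IH with
    | 0, _ =>
      intro a
      calc sensAt _ a ≤ 2 ^ 1 - 1 := sensAt_le_card _ _
        _ ≤ 1 := by norm_num
    | (k + 1), IH =>
      intro a
      show sensAt (fTree (k + 2)) a ≤ k + 2
      classical
      have hm : 0 < 2 ^ (k + 1) := pow_pos (by omega) _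
      have h2 : 2 ^ (k + 2) = 2 * 2 ^ (k + 1) := two_pow_succ_succ k
      set m := 2 ^ (k + 1) - 1 with hmdef
      have hm1 : m + 1 = 2 ^ (k + 1) := by omega
      have hn : 2 ^ (k + 2) - 1 = 2 * m + 1 := by omega
      set aL : Fin m → Bool := fun j => a ⟨j.1 + 1, by have := j.isLt; omega⟩ with haL
      set aR : Fin m → Bool := fun j => a ⟨j.1 + 2 ^ (k + 1), by have := j.isLt; omega⟩ with haR
      have hq : (0:ℕ) < 2 ^ (k + 2) - 1 := by omega
      have hbxor0 : ∀ i : Fin (2 ^ (k + 2) - 1), i.1 ≠ 0 →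
          (bxor a (eI i)) ⟨0, hq⟩ = a ⟨0, hq⟩ := by
        intro i hi
        show xor (a ⟨0, hq⟩) (decide ((⟨0, hq⟩ : Fin _) = i)) = _
        have hd : decide ((⟨0, hq⟩ : Fin (2 ^ (k + 2) - 1)) = i) = false := by
          simp only [decide_eq_false_iff_not, Fin.ext_iff]
          simpa using fun h => hi h.symm
        rw [hd, Bool.xor_false]
      cases ha : a ⟨0, hq⟩ with
      | false =>
        have hfa : fTree (k + 2) a = fTree (k + 1) aL := by
          rw [fTree_succ_succ, ha, if_neg Bool.false_ne_true]
        have hstep : ∀ i : Fin (2 ^ (k + 2) - 1), i.1 ≠ 0 →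
            fTree (k + 2) (bxor a (eI i)) =
              fTree (k + 1) (fun j : Fin m => xor (aL j) (decide (j.1 + 1 = i.1))) := by
          intro i hi0
          rw [fTree_succ_succ, hbxor0 i hi0, ha, if_neg Bool.false_ne_true]
          congr 1
          funext j
          show xor (a ⟨j.1 + 1, _⟩) (decide ((⟨j.1 + 1, _⟩ : Fin (2 ^ (k + 2) - 1)) = i)) = _
          congr 1
          simp only [decide_eq_decide, Fin.ext_iff]
        have hsub : (Finset.univ.filter fun i : Fin (2 ^ (k + 2) - 1) =>
              fTree (k + 2) (bxor a (eI i)) ≠ fTree (k + 2) a) ⊆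
            insert ⟨0, hq⟩ ((Finset.univ.filter fun j : Fin m =>
              fTree (k + 1) (bxor aL (eI j)) ≠ fTree (k + 1) aL).image
                (fun j : Fin m => (⟨j.1 + 1, by have := j.isLt; omega⟩ : Fin (2 ^ (k + 2) - 1)))) := by
          intro i hi
          simp only [Finset.mem_filter, Finset.mem_univ, true_and] at hi
          by_cases hi0 : i.1 = 0
          · have : i = ⟨0, hq⟩ := Fin.ext hi0
            rw [this]; exact Finset.mem_insert_self _ _
          · have hi' := hi
            rw [hstep i hi0, hfa] at hi'
            by_cases him : i.1 ≤ m
            · have hargs : (bxor aL (eI (⟨i.1 - 1, by omega⟩ : Fin m))) =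
                  fun j => xor (aL j) (decide (j.1 + 1 = i.1)) := by
                funext j
                show xor (aL j) (decide (j = (⟨i.1 - 1, by omega⟩ : Fin m))) = _
                congr 1
                simp only [decide_eq_decide, Fin.ext_iff]
                have := j.isLt
                constructor <;> intro h <;> omega
              refine Finset.mem_insert_of_mem (Finset.mem_image.mpr ⟨⟨i.1 - 1, by omega⟩, ?_, ?_⟩)
              · simp only [Finset.mem_filter, Finset.mem_univ, true_and]
                rw [hargs]; exact hi'
              · apply Fin.ext; simp; omega
            · exfalso
              apply hi'
              congr 1
              funext j
              have hd : decide (j.1 + 1 = i.1) = false := by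
                simp only [decide_eq_false_iff_not]; have := j.isLt; omega
              rw [hd, Bool.xor_false]
        calc sensAt (fTree (k + 2)) a
            ≤ (insert (⟨0, hq⟩ : Fin (2 ^ (k + 2) - 1)) ((Finset.univ.filter fun j : Fin m =>
                fTree (k + 1) (bxor aL (eI j)) ≠ fTree (k + 1) aL).image
                  (fun j : Fin m => (⟨j.1 + 1, by have := j.isLt; omega⟩ : Fin (2 ^ (k + 2) - 1))))).card :=
              Finset.card_le_card hsub
          _ ≤ ((Finset.univ.filter fun j : Fin m =>
                fTree (k + 1) (bxor aL (eI j)) ≠ fTree (k + 1) aL).image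
                  (fun j : Fin m => (⟨j.1 + 1, by have := j.isLt; omega⟩ : Fin (2 ^ (k + 2) - 1)))).card + 1 :=
              Finset.card_insert_le _ _
          _ ≤ sensAt (fTree (k + 1)) aL + 1 := by
              have h := Finset.card_image_le (s := Finset.univ.filter fun j : Fin m =>
                fTree (k + 1) (bxor aL (eI j)) ≠ fTree (k + 1) aL)
                (f := fun j : Fin m => (⟨j.1 + 1, by have := j.isLt; omega⟩ : Fin (2 ^ (k + 2) - 1)))
              have h2 : (Finset.univ.filter fun j : Fin m =>
                  fTree (k + 1) (bxor aL (eI j)) ≠ fTree (k + 1) aL).card = sensAt (fTree (k + 1)) aL := by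
                rfl
              omega
          _ ≤ (k + 1) + 1 := by have := IH aL; omega
      | true =>
        have hfa : fTree (k + 2) a = fTree (k + 1) aR := by
          rw [fTree_succ_succ, ha, if_pos rfl]
        have hstep : ∀ i : Fin (2 ^ (k + 2) - 1), i.1 ≠ 0 →
            fTree (k + 2) (bxor a (eI i)) =
              fTree (k + 1) (fun j : Fin m => xor (aR j) (decide (j.1 + 2 ^ (k + 1) = i.1))) := by
          intro i hi0
          rw [fTree_succ_succ, hbxor0 i hi0, ha, if_pos rfl]
          congr 1
          funext j
          show xor (a ⟨j.1 + 2 ^ (k + 1), _⟩)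
              (decide ((⟨j.1 + 2 ^ (k + 1), _⟩ : Fin (2 ^ (k + 2) - 1)) = i)) = _
          congr 1
          simp only [decide_eq_decide, Fin.ext_iff]
        have hsub : (Finset.univ.filter fun i : Fin (2 ^ (k + 2) - 1) =>
              fTree (k + 2) (bxor a (eI i)) ≠ fTree (k + 2) a) ⊆
            insert ⟨0, hq⟩ ((Finset.univ.filter fun j : Fin m =>
              fTree (k + 1) (bxor aR (eI j)) ≠ fTree (k + 1) aR).image
                (fun j : Fin m => (⟨j.1 + 2 ^ (k + 1), by have := j.isLt; omega⟩ : Fin (2 ^ (k + 2) - 1)))) := by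
          intro i hi
          simp only [Finset.mem_filter, Finset.mem_univ, true_and] at hi
          by_cases hi0 : i.1 = 0
          · have : i = ⟨0, hq⟩ := Fin.ext hi0
            rw [this]; exact Finset.mem_insert_self _ _
          · have hi' := hi
            rw [hstep i hi0, hfa] at hi'
            by_cases him : m + 1 ≤ i.1
            · have hargs : (bxor aR (eI (⟨i.1 - (m + 1), by have := i.isLt; omega⟩ : Fin m))) =
                  fun j => xor (aR j) (decide (j.1 + 2 ^ (k + 1) = i.1)) := by
                funext j
                show xor (aR j) (decide (j = (⟨i.1 - (m + 1), by have := i.isLt; omega⟩ : Fin m))) = _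
                congr 1
                simp only [decide_eq_decide, Fin.ext_iff]
                have := j.isLt
                constructor <;> intro h <;> omega
              refine Finset.mem_insert_of_mem (Finset.mem_image.mpr
                ⟨⟨i.1 - (m + 1), by have := i.isLt; omega⟩, ?_, ?_⟩)
              · simp only [Finset.mem_filter, Finset.mem_univ, true_and]
                rw [hargs]; exact hi'
              · apply Fin.ext; simp; omega
            · exfalso
              apply hi'
              congr 1
              funext j
              have hd : decide (j.1 + 2 ^ (k + 1) = i.1) = false := by
                simp only [decide_eq_false_iff_not]; have := j.isLt; omega
              rw [hd, Bool.xor_false]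
        calc sensAt (fTree (k + 2)) a
            ≤ (insert (⟨0, hq⟩ : Fin (2 ^ (k + 2) - 1)) ((Finset.univ.filter fun j : Fin m =>
                fTree (k + 1) (bxor aR (eI j)) ≠ fTree (k + 1) aR).image
                  (fun j : Fin m => (⟨j.1 + 2 ^ (k + 1), by have := j.isLt; omega⟩ : Fin (2 ^ (k + 2) - 1))))).card :=
              Finset.card_le_card hsub
          _ ≤ ((Finset.univ.filter fun j : Fin m =>
                fTree (k + 1) (bxor aR (eI j)) ≠ fTree (k + 1) aR).image
                  (fun j : Fin m => (⟨j.1 + 2 ^ (k + 1), by have := j.isLt; omega⟩ : Fin (2 ^ (k + 2) - 1)))).card + 1 :=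
              Finset.card_insert_le _ _
          _ ≤ sensAt (fTree (k + 1)) aR + 1 := by
              have h := Finset.card_image_le (s := Finset.univ.filter fun j : Fin m =>
                fTree (k + 1) (bxor aR (eI j)) ≠ fTree (k + 1) aR)
                (f := fun j : Fin m => (⟨j.1 + 2 ^ (k + 1), by have := j.isLt; omega⟩ : Fin (2 ^ (k + 2) - 1)))
              have h2 : (Finset.univ.filter fun j : Fin m =>
                  fTree (k + 1) (bxor aR (eI j)) ≠ fTree (k + 1) aR).card = sensAt (fTree (k + 1)) aR := by
                rfl
              omega
          _ ≤ (k + 1) + 1 := by have := IH aR; omega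

lemma sens_fTree_le (k : ℕ) : sens (fTree k) ≤ k := by
  apply Finset.sup_le
  intro a _
  exact sensAt_fTree_le k a
/-- for every `k ≥ 2`, `salt(f_k) ≥ 2^(k-2)` and hence
`salt(f_k) ≥ 2^(s(f_k) - 2)`: the shift-invariant alternation of `f_k` is exponential in
its sensitivity. -/
theorem stmt7 (k : ℕ) (hk : 2 ≤ k) :
    2 ^ (k - 2) ≤ saltF (fTree k) ∧ 2 ^ (sens (fTree k) - 2) ≤ saltF (fTree k) := by
  obtain ⟨k', rfl⟩ : ∃ k', k = k' + 1 := ⟨k - 1, by omega⟩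
  have hsalt : 2 ^ k' ≤ saltF (fTree (k' + 1)) := by
    rw [saltF]
    apply Finset.le_inf'
    intro b _
    obtain ⟨σ, hσ, halt⟩ := main_ind k' b
    calc (2:ℕ) ^ k' ≤ altChain (fun x => fTree (k' + 1) (bxor x b)) (chainOf σ) := halt
      _ = (if IsChainOn (chainOf σ) then
            altChain (fun x => fTree (k' + 1) (bxor x b)) (chainOf σ) else 0) := by
          rw [if_pos (chainOf_isChain σ hσ)]
      _ ≤ altF (fun x => fTree (k' + 1) (bxor x b)) := by
          unfold altF
          exact Finset.le_sup (f := fun x : Fin (2 ^ (k' + 1) - 1 + 1) → Fin (2 ^ (k' + 1) - 1) → Bool =>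
            if IsChainOn x then altChain (fun y => fTree (k' + 1) (bxor y b)) x else 0)
            (Finset.mem_univ (chainOf σ))
  constructor
  · exact le_trans (Nat.pow_le_pow_right (by omega) (by omega)) hsalt
  · have hs := sens_fTree_le (k' + 1)
    exact le_trans (Nat.pow_le_pow_right (by omega) (by omega)) hsalt
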